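/- Let x ∈ ℍ be a fixed quaternion and let f : ℍ → ℍ be the function f(w) = w·x·x*·w*. Then the HR*-derivative of f at every point w equals (1/2)·w·x·x*; that is, ∂(w·x·x*·w*)/∂w* = (1/2)·w·x·x*. -/

import Mathlib

open Quaternion

/-- The imaginary unit `i` of the real quaternions. -/
def qI : ℍ[ℝ] := ⟨0, 1, 0, 0⟩

/-- The imaginary unit `j` of the real quaternions. -/
def qJ : ℍ[ℝ] := ⟨0, 0, 1, 0⟩

/-- The imaginary unit `k` of the real quaternions. -/
def qK : ℍ[ℝ] := ⟨0, 0, 0, 1⟩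

/-- The HR*-derivative of `f : ℍ → ℍ` at `q`:
`(1/4) (D₁ f(q) + (Dᵢ f(q))·i + (Dⱼ f(q))·j + (Dₖ f(q))·k)`,
where `D_v f(q)` is the real Fréchet derivative of `f` at `q` in direction `v`. -/
noncomputable def HRStarDeriv (f : ℍ[ℝ] → ℍ[ℝ]) (q : ℍ[ℝ]) : ℍ[ℝ] :=
  (4 : ℍ[ℝ])⁻¹ * (fderiv ℝ f q 1 + fderiv ℝ f q qI * qI
    + fderiv ℝ f q qJ * qJ + fderiv ℝ f q qK * qK)

set_option synthInstance.maxHeartbeats 1000000 in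
set_option maxHeartbeats 2000000 in
noncomputable def starCLM : ℍ[ℝ] →L[ℝ] ℍ[ℝ] :=
  LinearMap.toContinuousLinearMap
    { toFun := fun q => star q
      map_add' := fun a b => star_add a b
      map_smul' := fun r a => by
        ext <;> simp [Quaternion.re_star, Quaternion.imI_star, Quaternion.imJ_star,
          Quaternion.imK_star] }

noncomputable def rmulCLM (c : ℍ[ℝ]) : ℍ[ℝ] →L[ℝ] ℍ[ℝ] :=
  LinearMap.toContinuousLinearMap (LinearMap.mulRight ℝ c)

@[simp] lemma rmulCLM_apply (c q : ℍ[ℝ]) : rmulCLM c q = q * c := rfl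

@[simp] lemma starCLM_apply (q : ℍ[ℝ]) : starCLM q = star q := rfl

set_option synthInstance.maxHeartbeats 1000000 in
set_option maxHeartbeats 2000000 in
lemma key (c w : ℍ[ℝ]) :
    HasFDerivAt (fun v : ℍ[ℝ] => v * c * star v)
      ((w * c) • starCLM + (rmulCLM c).smulRight (star w)) w := by
  have ha : HasFDerivAt (fun v : ℍ[ℝ] => v * c) (rmulCLM c) w :=
    (hasFDerivAt_id w).mul_const' c
  have hb : HasFDerivAt (star : ℍ[ℝ] → ℍ[ℝ]) starCLM w := starCLM.hasFDerivAt
  exact ha.mul' hb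

@[simp] lemma qI_re : qI.re = 0 := rfl
@[simp] lemma qI_imI : qI.imI = 1 := rfl
@[simp] lemma qI_imJ : qI.imJ = 0 := rfl
@[simp] lemma qI_imK : qI.imK = 0 := rfl
@[simp] lemma qJ_re : qJ.re = 0 := rfl
@[simp] lemma qJ_imI : qJ.imI = 0 := rfl
@[simp] lemma qJ_imJ : qJ.imJ = 1 := rfl
@[simp] lemma qJ_imK : qJ.imK = 0 := rfl
@[simp] lemma qK_re : qK.re = 0 := rfl
@[simp] lemma qK_imI : qK.imI = 0 := rfl
@[simp] lemma qK_imJ : qK.imJ = 0 := rfl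
@[simp] lemma qK_imK : qK.imK = 1 := rfl

set_option synthInstance.maxHeartbeats 1000000 in
set_option synthInstance.maxHeartbeats 1000000 in
set_option maxHeartbeats 2000000 in
/-- ∂(w·x·x*·w*)/∂w* = (1/2)·w·x·x*. -/
theorem hr_star_deriv_quadratic (x : ℍ[ℝ]) (w : ℍ[ℝ]) :
    HRStarDeriv (fun v => v * x * star x * star v) w = (2 : ℍ[ℝ])⁻¹ * (w * x * star x) := by
  have h := key (x * star x) w
  have h2 : (fun v : ℍ[ℝ] => v * (x * star x) * star v)
      = (fun v : ℍ[ℝ] => v * x * star x * star v) := by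
    funext v; simp [mul_assoc]
  rw [h2] at h
  have c4 : (4 : ℍ[ℝ]) = ((4 : ℝ) : ℍ[ℝ]) := by
    have := map_ofNat (algebraMap ℝ ℍ[ℝ]) 4
    simpa [Quaternion.algebraMap_def] using this.symm
  have c2 : (2 : ℍ[ℝ]) = ((2 : ℝ) : ℍ[ℝ]) := by
    have := map_ofNat (algebraMap ℝ ℍ[ℝ]) 2
    simpa [Quaternion.algebraMap_def] using this.symm
  have h4 : (4 : ℍ[ℝ])⁻¹ = ((4⁻¹ : ℝ) : ℍ[ℝ]) := by
    rw [c4, ← Quaternion.coe_inv]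
  have h2q : (2 : ℍ[ℝ])⁻¹ = ((2⁻¹ : ℝ) : ℍ[ℝ]) := by
    rw [c2, ← Quaternion.coe_inv]
  rw [HRStarDeriv, h.fderiv, h4, h2q]
  simp only [ContinuousLinearMap.add_apply, ContinuousLinearMap.smul_apply,
    ContinuousLinearMap.smulRight_apply, starCLM_apply, rmulCLM_apply, smul_eq_mul]
  ext <;>
    simp only [qI_re, qI_imI, qI_imJ, qI_imK, qJ_re, qJ_imI, qJ_imJ, qJ_imK, qK_re, qK_imI, qK_imJ, qK_imK, Quaternion.re_mul, Quaternion.imI_mul,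
      Quaternion.imJ_mul, Quaternion.imK_mul, Quaternion.re_star, Quaternion.imI_star,
      Quaternion.imJ_star, Quaternion.imK_star, Quaternion.re_add, Quaternion.imI_add,
      Quaternion.imJ_add, Quaternion.imK_add, Quaternion.re_coe, Quaternion.imI_coe, Quaternion.imJ_coe, Quaternion.imK_coe] <;>
    norm_num <;> ring
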